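/- Assume 2 ≤ m ≤ N−2. Then for all collections e and e′ of finite norm, ‖F(e) − F(e′)‖ ≤ (4|ε| + max{‖e‖, ‖e′‖}) · ‖e − e′‖. Consequently, for δ > 0 and ε with 4|ε| + δ < 1, F is a contraction on the closed ball of radius δ about the origin. -/

import Mathlib

open Finset
open scoped symmDiff

/-- `M = {1,…,m}` viewed inside `ℤ/Nℤ`. -/
def Mset (N m : ℕ) : Finset (ZMod N) := (Finset.Icc 1 m).image (fun i : ℕ => (i : ZMod N))

/-- `∂Y`: the set of `j ∈ ℤ/Nℤ` such that exactly one of `j`, `j+1` lies in `Y`. -/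
def pbdry (N : ℕ) [NeZero N] (Y : Finset (ZMod N)) : Finset (ZMod N) :=
  Finset.univ.filter fun j => (j ∈ Y ∧ j + 1 ∉ Y) ∨ (j ∉ Y ∧ j + 1 ∈ Y)

/-- `n(X) = |∂(X Δ M)|`. -/
def nX (N m : ℕ) [NeZero N] (X : Finset (ZMod N)) : ℕ := (pbdry N (X ∆ Mset N m)).card

/-- The translate `Y + s = {i + s : i ∈ Y}`. -/
def tr (N : ℕ) (Y : Finset (ZMod N)) (s : ZMod N) : Finset (ZMod N) := Y.image (· + s)

/-- Extend a family of coefficients by setting `e(∅) := 1` and `e(M Δ (M+s)) := 0`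
for `s ≠ 0`. -/
def pext (N m : ℕ) [NeZero N] (e : Finset (ZMod N) → ℝ) : Finset (ZMod N) → ℝ :=
  fun X =>
    if X = ∅ then 1
    else if ∃ s : ZMod N, X = Mset N m ∆ tr N (Mset N m) s then 0
    else e X

/-- The sets `X` with `X:m` (i.e. `|X Δ M| = m`) and `n(X) > 2`. -/
def psector (N m : ℕ) [NeZero N] : Finset (Finset (ZMod N)) :=
  Finset.univ.filter fun X => (X ∆ Mset N m).card = m ∧ 2 < nX N m X

/-- The droplet fixed-point map `F(e_s, e(X)) = (e′_s, e′(X))`, where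
`e′_s = 2ε·Σ_{j ∈ ∂(M−s)} e(M Δ (M−s) Δ {j,j+1})` and, for `X` with `X:m` and `n(X) > 2`,
`e′(X) = −(ε/(n(X)−2))·Σ_{j ∈ ∂(X Δ M)} e(X Δ {j,j+1})
  + (1/(2(n(X)−2)))·Σ_{s} e_s·e((X+s) Δ (M+s) Δ M)`
(with the conventions `e(∅) = 1`, `e(M Δ (M+s)) = 0` for `s ≠ 0`);
all other components are set to `0`. -/
noncomputable def dropF (N m : ℕ) [NeZero N] (ε : ℝ)
    (p : (ZMod N → ℝ) × (Finset (ZMod N) → ℝ)) :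
    (ZMod N → ℝ) × (Finset (ZMod N) → ℝ) :=
  (fun s => 2 * ε * ∑ j ∈ pbdry N (tr N (Mset N m) (-s)),
      pext N m p.2 (Mset N m ∆ tr N (Mset N m) (-s) ∆ {j, j + 1}),
    fun X =>
      if (X ∆ Mset N m).card = m ∧ 2 < nX N m X then
        -(ε / ((nX N m X : ℝ) - 2)) *
            ∑ j ∈ pbdry N (X ∆ Mset N m), pext N m p.2 (X ∆ {j, j + 1})
          + (1 / (2 * ((nX N m X : ℝ) - 2))) *
              ∑ s : ZMod N, p.1 s * pext N m p.2 (tr N X s ∆ tr N (Mset N m) s ∆ Mset N m)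
      else 0)

/-- The norm `‖e‖ = Σ_s |e_s| + 2·Σ_{X:m, n(X)>2} (n(X)−2)·|e(X)|`. -/
def pnorm (N m : ℕ) [NeZero N] (p : (ZMod N → ℝ) × (Finset (ZMod N) → ℝ)) : ℝ :=
  ∑ s : ZMod N, |p.1 s|
    + 2 * ∑ X ∈ psector N m, ((nX N m X : ℝ) - 2) * |p.2 X|


set_option linter.unusedSectionVars false
section basics
variable (N : ℕ) [NeZero N]

lemma mem_pbdry {Y : Finset (ZMod N)} {j : ZMod N} :
    j ∈ pbdry N Y ↔ ((j ∈ Y ∧ j + 1 ∉ Y) ∨ (j ∉ Y ∧ j + 1 ∈ Y)) := by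
  simp [pbdry]

lemma cast_val_eq (x : ZMod N) : ((x.val : ℕ) : ZMod N) = x := by
  rw [ZMod.natCast_val, ZMod.cast_id]

lemma mem_tr {Y : Finset (ZMod N)} {s x : ZMod N} : x ∈ tr N Y s ↔ x - s ∈ Y := by
  constructor
  · rintro h
    obtain ⟨y, hy, rfl⟩ := Finset.mem_image.mp h
    simpa using hy
  · intro h
    exact Finset.mem_image.mpr ⟨x - s, h, by ring⟩

lemma card_tr (Y : Finset (ZMod N)) (s : ZMod N) : (tr N Y s).card = Y.card :=
  Finset.card_image_of_injective _ (add_left_injective s)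

lemma tr_symmDiff (A B : Finset (ZMod N)) (s : ZMod N) :
    tr N (A ∆ B) s = tr N A s ∆ tr N B s := by
  ext x
  simp [mem_tr, Finset.mem_symmDiff]

lemma pbdry_tr (Y : Finset (ZMod N)) (s : ZMod N) :
    pbdry N (tr N Y s) = tr N (pbdry N Y) s := by
  ext j
  have h1 : j + 1 - s = (j - s) + 1 := by ring
  simp [mem_pbdry, mem_tr, h1]

lemma tr_injective (s : ZMod N) {A B : Finset (ZMod N)} (h : tr N A s = tr N B s) : A = B := by
  ext x
  have := Finset.ext_iff.mp h (x + s)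
  simpa [mem_tr] using this

lemma pbdry_compl (Y : Finset (ZMod N)) : pbdry N Yᶜ = pbdry N Y := by
  ext j
  simp only [mem_pbdry, Finset.mem_compl]
  tauto

lemma pbdry_symmDiff_subset (A B : Finset (ZMod N)) :
    pbdry N (A ∆ B) ⊆ pbdry N A ∪ pbdry N B := by
  intro j hj
  simp only [mem_pbdry, Finset.mem_symmDiff] at hj
  simp only [Finset.mem_union, mem_pbdry]
  by_contra h
  push_neg at h
  obtain ⟨h1, h2⟩ := h
  tauto

/-- `|∂Y|` is even. -/
lemma pbdry_card_even (Y : Finset (ZMod N)) : Even (pbdry N Y).card := by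
  classical
  set A := Finset.univ.filter (fun j : ZMod N => j ∈ Y ∧ j + 1 ∉ Y) with hA
  set B := Finset.univ.filter (fun j : ZMod N => j ∉ Y ∧ j + 1 ∈ Y) with hB
  set C := Finset.univ.filter (fun j : ZMod N => j ∈ Y ∧ j + 1 ∈ Y) with hC
  have hsplit : pbdry N Y = A ∪ B := by
    ext j; simp [pbdry, hA, hB]
  have hdisj : Disjoint A B := by
    rw [Finset.disjoint_left]
    intro j hj hj'
    simp [hA] at hj; simp [hB] at hj'
    tauto
  have hYcard : (Finset.univ.filter (fun j : ZMod N => j ∈ Y)).card = Y.card := by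
    simp [Finset.filter_univ_mem]
  have hAcard : C.card + A.card = Y.card := by
    have h := Finset.card_filter_add_card_filter_not
      (s := Finset.univ.filter (fun j : ZMod N => j ∈ Y)) (p := fun j => j + 1 ∈ Y)
    rw [Finset.filter_filter, Finset.filter_filter, hYcard] at h
    rw [hC, hA, ← h]
  have himg : (Finset.univ.filter (fun j : ZMod N => j + 1 ∈ Y)).card = Y.card := by
    apply Finset.card_bij (fun j _ => j + 1)
    · intro a ha; simpa using (Finset.mem_filter.mp ha).2
    · intro a _ b _ hab; exact add_right_cancel hab
    · intro b hb; exact ⟨b - 1, by simpa using hb, by ring⟩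
  have hBcard : C.card + B.card = Y.card := by
    have h := Finset.card_filter_add_card_filter_not
      (s := Finset.univ.filter (fun j : ZMod N => j + 1 ∈ Y)) (p := fun j => j ∈ Y)
    rw [Finset.filter_filter, Finset.filter_filter, himg] at h
    have e1 : C = Finset.univ.filter (fun j : ZMod N => j + 1 ∈ Y ∧ j ∈ Y) := by
      rw [hC]; ext j; simp; tauto
    have e2 : B = Finset.univ.filter (fun j : ZMod N => j + 1 ∈ Y ∧ j ∉ Y) := by
      rw [hB]; ext j; simp; tauto
    rw [← h, e1, e2]
  have hABeq : A.card = B.card := by omega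
  rw [hsplit, Finset.card_union_of_disjoint hdisj, hABeq]
  exact ⟨B.card, by ring⟩

end basics

section chunk2
variable (N m : ℕ) [NeZero N]

lemma tr_zero (Y : Finset (ZMod N)) : tr N Y 0 = Y := by ext x; simp [mem_tr]

lemma tr_tr (Y : Finset (ZMod N)) (s t : ZMod N) : tr N (tr N Y s) t = tr N Y (s + t) := by
  ext x
  have h : x - t - s = x - (s + t) := by ring
  simp [mem_tr, h]

lemma mem_Mset_iff (hmN : m + 2 ≤ N) {x : ZMod N} :
    x ∈ Mset N m ↔ 1 ≤ x.val ∧ x.val ≤ m := by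
  constructor
  · rintro hx
    obtain ⟨i, hi, rfl⟩ := Finset.mem_image.mp hx
    rw [Finset.mem_Icc] at hi
    rw [ZMod.val_cast_of_lt (by omega)]
    exact hi
  · intro ⟨h1, h2⟩
    exact Finset.mem_image.mpr ⟨x.val, Finset.mem_Icc.mpr ⟨h1, h2⟩, cast_val_eq N x⟩

lemma card_Mset (hm : 2 ≤ m) (hmN : m + 2 ≤ N) : (Mset N m).card = m := by
  rw [Mset, Finset.card_image_of_injOn, Nat.card_Icc]
  · omega
  · intro x hx y hy hxy
    simp only [Finset.coe_Icc, Set.mem_Icc] at hx hy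
    have := congrArg ZMod.val hxy
    rwa [ZMod.val_cast_of_lt (by omega), ZMod.val_cast_of_lt (by omega)] at this

lemma pbdry_Mset (hN : 4 ≤ N) (hm : 2 ≤ m) (hmN : m + 2 ≤ N) :
    pbdry N (Mset N m) = {(0 : ZMod N), (m : ZMod N)} := by
  haveI : Fact (1 < N) := ⟨by omega⟩
  ext j
  have hv : j.val < N := ZMod.val_lt j
  have hval1 : (j + 1).val = (j.val + 1) % N := by rw [ZMod.val_add, ZMod.val_one]
  have h0 : j = 0 ↔ j.val = 0 := by rw [← ZMod.val_eq_zero]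
  have hmm : j = (m : ZMod N) ↔ j.val = m := by
    constructor
    · rintro rfl; exact ZMod.val_cast_of_lt (by omega)
    · intro h; rw [← cast_val_eq N j, h]
  rw [mem_pbdry, mem_Mset_iff N m hmN, mem_Mset_iff N m hmN, hval1]
  simp only [Finset.mem_insert, Finset.mem_singleton, h0, hmm]
  rcases Nat.lt_or_ge (j.val + 1) N with h | h
  · rw [Nat.mod_eq_of_lt h]; omega
  · have hje : j.val + 1 = N := by omega
    rw [hje, Nat.mod_self]; omega

lemma Mset_tr_inj (hN : 4 ≤ N) (hm : 2 ≤ m) (hmN : m + 2 ≤ N) {s t : ZMod N}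
    (h : tr N (Mset N m) s = tr N (Mset N m) t) : s = t := by
  have hM : Mset N m = tr N (Mset N m) (t - s) := by
    have := congrArg (fun Y => tr N Y (-s)) h
    simpa [tr_tr, tr_zero, sub_eq_add_neg, add_comm] using this
  set u := t - s with hu
  have hzero : (0 : ZMod N) ∉ Mset N m := by
    rw [mem_Mset_iff N m hmN]; simp
  have hmne : (m : ZMod N) ≠ 0 := by
    intro h'
    have := congrArg ZMod.val h'
    rw [ZMod.val_cast_of_lt (by omega), ZMod.val_zero] at this
    omega
  have hmmem : (m : ZMod N) ∈ Mset N m := by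
    rw [mem_Mset_iff N m hmN, ZMod.val_cast_of_lt (by omega)]; omega
  have hbd : ({(0:ZMod N), (m : ZMod N)} : Finset (ZMod N)) = tr N {(0:ZMod N), (m : ZMod N)} u := by
    conv_lhs => rw [← pbdry_Mset N m hN hm hmN]
    rw [hM, pbdry_tr, pbdry_Mset N m hN hm hmN]
  have htr_pair : tr N {(0:ZMod N), (m : ZMod N)} u = {u, (m : ZMod N) + u} := by
    ext x
    simp only [mem_tr, Finset.mem_insert, Finset.mem_singleton]
    constructor
    · rintro (h' | h')
      · left; linear_combination h'
      · right; linear_combination h'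
    · rintro (rfl | rfl)
      · left; ring
      · right; ring
  rw [htr_pair] at hbd
  have h0mem : (0 : ZMod N) ∈ ({u, (m:ZMod N) + u} : Finset (ZMod N)) := by
    rw [← hbd]; simp
  simp only [Finset.mem_insert, Finset.mem_singleton] at h0mem
  rcases h0mem with h' | h'
  · rw [hu] at h'; exact (sub_eq_zero.mp h'.symm).symm
  · exfalso
    have : (m : ZMod N) + u ∈ tr N (Mset N m) u := (mem_tr N).mpr (by simpa using hmmem)
    rw [← hM, ← h'] at this
    exact hzero this

lemma walk (Z : Finset (ZMod N)) (a b : ZMod N) (hsub : pbdry N Z ⊆ {a, b}) (hb1 : b + 1 ∈ Z) :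
    ∀ k : ℕ, k < (a - b).val → b + 1 + (k : ZMod N) ∈ Z := by
  intro k
  induction k with
  | zero => intro _; simpa using hb1
  | succ k ih =>
    intro hk
    have hx : b + 1 + (k : ZMod N) ∈ Z := ih (by omega)
    have hcastval : ((k + 1 : ℕ) : ZMod N).val = k + 1 :=
      ZMod.val_cast_of_lt (lt_trans hk (ZMod.val_lt _))
    have hxa : b + 1 + (k : ZMod N) ≠ a := by
      intro h
      have hcast : ((k + 1 : ℕ) : ZMod N) = a - b := by push_cast; linear_combination h
      rw [hcast] at hcastval
      omega
    have hxb : b + 1 + (k : ZMod N) ≠ b := by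
      intro h
      have hcast : ((k + 1 : ℕ) : ZMod N) = 0 := by push_cast; linear_combination h
      rw [hcast, ZMod.val_zero] at hcastval
      omega
    have hxnb : b + 1 + (k : ZMod N) ∉ pbdry N Z := by
      intro hmem
      rcases Finset.mem_insert.mp (hsub hmem) with h | h
      · exact hxa h
      · exact hxb (Finset.mem_singleton.mp h)
    have hx1 : b + 1 + (k : ZMod N) + 1 ∈ Z := by
      by_contra h
      exact hxnb ((mem_pbdry N).mpr (Or.inl ⟨hx, h⟩))
    convert hx1 using 1
    push_cast
    ring

lemma eq_univ_of_succ_closed (Z : Finset (ZMod N)) (hne : Z.Nonempty)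
    (h : ∀ a ∈ Z, a + 1 ∈ Z) : Z = Finset.univ := by
  obtain ⟨a, ha⟩ := hne
  have key : ∀ k : ℕ, a + (k : ZMod N) ∈ Z := by
    intro k
    induction k with
    | zero => simpa using ha
    | succ k ih =>
      have hthis := h _ ih
      have h2 : a + ((k+1:ℕ) : ZMod N) = a + (k : ZMod N) + 1 := by push_cast; ring
      rw [h2]
      exact hthis
  apply Finset.eq_univ_of_forall
  intro x
  have hx := key (x - a).val
  rwa [cast_val_eq, add_sub_cancel] at hx

lemma exists_exit (Z : Finset (ZMod N)) (hne : Z.Nonempty) (hnu : Z ≠ Finset.univ) :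
    ∃ a, a ∈ Z ∧ a + 1 ∉ Z := by
  by_contra h
  push_neg at h
  exact hnu (eq_univ_of_succ_closed N Z hne h)

lemma exists_entry (Z : Finset (ZMod N)) (hne : Z.Nonempty) (hnu : Z ≠ Finset.univ) :
    ∃ b, b ∉ Z ∧ b + 1 ∈ Z := by
  have hne' : Zᶜ.Nonempty := Finset.nonempty_iff_ne_empty.mpr (by simpa [Finset.compl_eq_empty_iff] using hnu)
  have hnu' : Zᶜ ≠ Finset.univ := by
    intro h
    obtain ⟨x, hx⟩ := hne
    have : x ∈ Zᶜ := h ▸ Finset.mem_univ x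
    exact (Finset.mem_compl.mp this) hx
  obtain ⟨a, ha, ha1⟩ := exists_exit N Zᶜ hne' hnu'
  exact ⟨a, Finset.mem_compl.mp ha, by simpa [Finset.mem_compl] using ha1⟩

end chunk2

section chunk3
variable (N m : ℕ) [NeZero N]

lemma eq_tr_Mset_of_small_bdry (hm : 2 ≤ m) (hmN : m + 2 ≤ N) (Z : Finset (ZMod N))
    (hcard : Z.card = m) (hb : (pbdry N Z).card ≤ 2) :
    ∃ t, Z = tr N (Mset N m) t := by
  have hNcard : Fintype.card (ZMod N) = N := ZMod.card N
  have hne : Z.Nonempty := Finset.card_pos.mp (by omega)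
  have hnu : Z ≠ Finset.univ := by
    intro h
    rw [h, Finset.card_univ, hNcard] at hcard
    omega
  obtain ⟨a, haZ, ha1⟩ := exists_exit N Z hne hnu
  obtain ⟨b, hbZ, hb1⟩ := exists_entry N Z hne hnu
  have hamem : a ∈ pbdry N Z := (mem_pbdry N).mpr (Or.inl ⟨haZ, ha1⟩)
  have hbmem : b ∈ pbdry N Z := (mem_pbdry N).mpr (Or.inr ⟨hbZ, hb1⟩)
  have hab : a ≠ b := fun h => hbZ (h ▸ haZ)
  have hsub : pbdry N Z ⊆ {a, b} := by
    have h1 : ({a, b} : Finset (ZMod N)) ⊆ pbdry N Z := by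
      intro x hx
      rcases Finset.mem_insert.mp hx with rfl | hx
      · exact hamem
      · rwa [Finset.mem_singleton.mp hx]
    rw [← Finset.eq_of_subset_of_card_le h1 (by rw [Finset.card_pair hab]; omega)]
  set L := (a - b).val with hL
  have hab' : a - b ≠ 0 := sub_ne_zero.mpr hab
  have hL0 : 0 < L := Nat.pos_of_ne_zero (fun h => hab' (by rwa [← ZMod.val_eq_zero]))
  have hLN : L < N := ZMod.val_lt _
  have hAZ : ∀ k < L, b + 1 + (k : ZMod N) ∈ Z := walk N Z a b hsub hb1
  have hcompl_sub : pbdry N Zᶜ ⊆ {b, a} := by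
    rw [pbdry_compl]
    intro x hx
    have := hsub hx
    simp only [Finset.mem_insert, Finset.mem_singleton] at this ⊢
    tauto
  have hBZ : ∀ k < (b - a).val, a + 1 + (k : ZMod N) ∉ Z := by
    intro k hk
    have := walk N Zᶜ b a hcompl_sub (by rw [Finset.mem_compl]; exact ha1) k hk
    simpa [Finset.mem_compl] using this
  have hvalneg : (b - a).val = N - L := by
    have h' : b - a = -(a - b) := by ring
    rw [h', ZMod.neg_val, if_neg hab']
  set A := (Finset.range L).image (fun k : ℕ => b + 1 + (k : ZMod N)) with hAdef
  set B := (Finset.range (N - L)).image (fun k : ℕ => a + 1 + (k : ZMod N)) with hBdef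
  have hAcard : A.card = L := by
    rw [hAdef, Finset.card_image_of_injOn, Finset.card_range]
    intro x hx y hy hxy
    simp only [Finset.coe_range, Set.mem_Iio] at hx hy
    have h1 : ((x : ℕ) : ZMod N) = ((y : ℕ) : ZMod N) := by
      have := hxy
      field_simp at this
      linear_combination this
    have := congrArg ZMod.val h1
    rwa [ZMod.val_cast_of_lt (by omega), ZMod.val_cast_of_lt (by omega)] at this
  have hBcard : B.card = N - L := by
    rw [hBdef, Finset.card_image_of_injOn, Finset.card_range]
    intro x hx y hy hxy
    simp only [Finset.coe_range, Set.mem_Iio] at hx hy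
    have h1 : ((x : ℕ) : ZMod N) = ((y : ℕ) : ZMod N) := by
      field_simp at hxy
      linear_combination hxy
    have := congrArg ZMod.val h1
    rwa [ZMod.val_cast_of_lt (by omega), ZMod.val_cast_of_lt (by omega)] at this
  have hAsub : A ⊆ Z := by
    intro x hx
    obtain ⟨k, hk, rfl⟩ := Finset.mem_image.mp hx
    exact hAZ k (Finset.mem_range.mp hk)
  have hBsub : ∀ x ∈ B, x ∉ Z := by
    intro x hx
    obtain ⟨k, hk, rfl⟩ := Finset.mem_image.mp hx
    exact hBZ k (by rw [hvalneg]; exact Finset.mem_range.mp hk)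
  have hdisj : Disjoint A B := by
    rw [Finset.disjoint_left]
    intro x hx hx'
    exact hBsub x hx' (hAsub hx)
  have hunion : A ∪ B = Finset.univ := by
    apply Finset.eq_univ_of_card
    rw [Finset.card_union_of_disjoint hdisj, hAcard, hBcard, hNcard]
    omega
  have hZA : Z = A := by
    apply Finset.Subset.antisymm _ hAsub
    intro x hx
    have hx' : x ∈ A ∪ B := hunion ▸ Finset.mem_univ x
    rcases Finset.mem_union.mp hx' with h | h
    · exact h
    · exact absurd hx (hBsub x h)
  have hLm : L = m := by rw [hZA, hAcard] at hcard; exact hcard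
  refine ⟨b, ?_⟩
  rw [hZA]
  ext x
  rw [mem_tr, mem_Mset_iff N m hmN]
  simp only [hAdef, Finset.mem_image, Finset.mem_range]
  constructor
  · rintro ⟨k, hk, rfl⟩
    have h1 : (b + 1 + (k : ZMod N)) - b = ((k + 1 : ℕ) : ZMod N) := by push_cast; ring
    rw [h1, ZMod.val_cast_of_lt (by omega)]
    omega
  · rintro ⟨h1, h2⟩
    refine ⟨(x - b).val - 1, by omega, ?_⟩
    have h3 : (((x - b).val - 1 : ℕ) : ZMod N) = (x - b) - 1 := by
      rw [Nat.cast_sub h1, cast_val_eq]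
      simp
    rw [h3]
    ring
end chunk3

section chunk4
variable (N m : ℕ) [NeZero N]

lemma pbdry_flip (Z : Finset (ZMod N)) (j : ZMod N) :
    j ∈ pbdry N (Z ∆ {j, j + 1}) ↔ j ∈ pbdry N Z := by
  have h1 : j ∈ Z ∆ {j, j + 1} ↔ j ∉ Z := by
    simp [Finset.mem_symmDiff]
  have h2 : j + 1 ∈ Z ∆ {j, j + 1} ↔ j + 1 ∉ Z := by
    simp [Finset.mem_symmDiff]
  rw [mem_pbdry, mem_pbdry, h1, h2]
  tauto

lemma card_symmDiff_pair (hN : 4 ≤ N) {Z : Finset (ZMod N)} {j : ZMod N}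
    (hj : j ∈ pbdry N Z) : (Z ∆ {j, j + 1}).card = Z.card := by
  haveI : Fact (1 < N) := ⟨by omega⟩
  have hne : j ≠ j + 1 := by
    intro h
    have : (1 : ZMod N) = 0 := by linear_combination -h
    exact one_ne_zero this
  rcases (mem_pbdry N).mp hj with ⟨h1, h2⟩ | ⟨h1, h2⟩
  · have hset : Z ∆ {j, j + 1} = insert (j + 1) (Z.erase j) := by
      ext x
      simp only [Finset.mem_symmDiff, Finset.mem_insert, Finset.mem_singleton,
        Finset.mem_erase]
      by_cases hx1 : x = j
      · subst hx1; simp [h1, h2, hne]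
      · by_cases hx2 : x = j + 1
        · subst hx2; simp [h2, hne]; try tauto
        · simp [hx1, hx2]
    rw [hset, Finset.card_insert_of_notMem (by simp [h2]), Finset.card_erase_of_mem h1]
    have : 0 < Z.card := Finset.card_pos.mpr ⟨j, h1⟩
    omega
  · have hset : Z ∆ {j, j + 1} = insert j (Z.erase (j + 1)) := by
      ext x
      simp only [Finset.mem_symmDiff, Finset.mem_insert, Finset.mem_singleton,
        Finset.mem_erase]
      by_cases hx1 : x = j
      · subst hx1; simp [h1, hne]; try tauto
      · by_cases hx2 : x = j + 1
        · subst hx2; simp [h2, hne]; try tauto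
        · simp [hx1, hx2]
    rw [hset, Finset.card_insert_of_notMem (by simp [h1]), Finset.card_erase_of_mem h2]
    have : 0 < Z.card := Finset.card_pos.mpr ⟨j + 1, h2⟩
    omega

lemma nX_of_symmDiff_eq (X : Finset (ZMod N)) : X ∆ Mset N m ∆ Mset N m = X := by
  ext x; simp [Finset.mem_symmDiff]; try tauto

lemma symmDiff_Mset_of_special (s : ZMod N) :
    (Mset N m ∆ tr N (Mset N m) s) ∆ Mset N m = tr N (Mset N m) s := by
  ext x; simp [Finset.mem_symmDiff]; try tauto

lemma nX_special (hN : 4 ≤ N) (hm : 2 ≤ m) (hmN : m + 2 ≤ N) (s : ZMod N) :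
    nX N m (Mset N m ∆ tr N (Mset N m) s) = 2 := by
  have hmne : (m : ZMod N) ≠ 0 := by
    intro h'
    have := congrArg ZMod.val h'
    rw [ZMod.val_cast_of_lt (by omega), ZMod.val_zero] at this
    omega
  rw [nX, symmDiff_Mset_of_special, pbdry_tr, card_tr, pbdry_Mset N m hN hm hmN,
    Finset.card_pair hmne.symm]

lemma mem_psector_of (hN : 4 ≤ N) (hm : 2 ≤ m) (hmN : m + 2 ≤ N) {X : Finset (ZMod N)}
    (hcard : (X ∆ Mset N m).card = m)
    (hns : ¬ ∃ s : ZMod N, X = Mset N m ∆ tr N (Mset N m) s) : X ∈ psector N m := by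
  refine Finset.mem_filter.mpr ⟨Finset.mem_univ _, hcard, ?_⟩
  by_contra h
  push_neg at h
  obtain ⟨t, ht⟩ := eq_tr_Mset_of_small_bdry N m hm hmN (X ∆ Mset N m) hcard h
  refine hns ⟨t, ?_⟩
  have := congrArg (· ∆ Mset N m) ht
  rw [nX_of_symmDiff_eq] at this
  rw [this]
  ext x; simp [Finset.mem_symmDiff]; try tauto

lemma psector_not_special (hN : 4 ≤ N) (hm : 2 ≤ m) (hmN : m + 2 ≤ N) {X : Finset (ZMod N)}
    (hX : X ∈ psector N m) : ¬ ∃ s : ZMod N, X = Mset N m ∆ tr N (Mset N m) s := by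
  rintro ⟨s, rfl⟩
  have h := (Finset.mem_filter.mp hX).2.2
  rw [nX_special N m hN hm hmN] at h
  omega

lemma psector_ne_empty (hN : 4 ≤ N) (hm : 2 ≤ m) (hmN : m + 2 ≤ N) {X : Finset (ZMod N)}
    (hX : X ∈ psector N m) : X ≠ ∅ := by
  rintro rfl
  refine psector_not_special N m hN hm hmN hX ⟨0, ?_⟩
  rw [tr_zero]
  simp

lemma pext_eq_of_mem_psector (hN : 4 ≤ N) (hm : 2 ≤ m) (hmN : m + 2 ≤ N)
    (e : Finset (ZMod N) → ℝ) {X : Finset (ZMod N)} (hX : X ∈ psector N m) :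
    pext N m e X = e X := by
  rw [pext, if_neg (psector_ne_empty N m hN hm hmN hX),
    if_neg (psector_not_special N m hN hm hmN hX)]

lemma pext_sub_eq_zero_of_not_psector (hN : 4 ≤ N) (hm : 2 ≤ m) (hmN : m + 2 ≤ N)
    (e e' : Finset (ZMod N) → ℝ) {X : Finset (ZMod N)} (hcard : (X ∆ Mset N m).card = m)
    (hX : X ∉ psector N m) : pext N m e X = pext N m e' X := by
  have hs : ∃ s : ZMod N, X = Mset N m ∆ tr N (Mset N m) s := by
    by_contra hns
    exact hX (mem_psector_of N m hN hm hmN hcard hns)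
  rw [pext, pext]
  by_cases h0 : X = ∅
  · rw [if_pos h0, if_pos h0]
  · rw [if_neg h0, if_neg h0, if_pos hs, if_pos hs]

lemma nX_ge_four {X : Finset (ZMod N)} (hX : X ∈ psector N m) : 4 ≤ nX N m X := by
  have h := (Finset.mem_filter.mp hX).2.2
  obtain ⟨r, hr⟩ := pbdry_card_even N (X ∆ Mset N m)
  rw [nX] at *
  omega

lemma card_psector_sector {X : Finset (ZMod N)} (hX : X ∈ psector N m) :
    (X ∆ Mset N m).card = m := (Finset.mem_filter.mp hX).2.1

end chunk4

section sumhelp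

lemma sum_comp_le {α β : Type*} [DecidableEq α] [DecidableEq β] (A : Finset α) (B : Finset β)
    (g : α → β) (f : β → ℝ) (c : β → ℝ)
    (hf : ∀ b, 0 ≤ f b)
    (hg : ∀ a ∈ A, f (g a) ≠ 0 → g a ∈ B)
    (hfib : ∀ b ∈ B, ((A.filter fun a => g a = b).card : ℝ) ≤ c b) :
    ∑ a ∈ A, f (g a) ≤ ∑ b ∈ B, c b * f b := by
  classical
  set A' := A.filter (fun a => g a ∈ B) with hA'
  have h1 : ∑ a ∈ A, f (g a) = ∑ a ∈ A', f (g a) := by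
    rw [← Finset.sum_filter_add_sum_filter_not A (fun a => g a ∈ B)]
    have h0 : ∑ a ∈ A.filter (fun a => ¬ g a ∈ B), f (g a) = 0 := by
      apply Finset.sum_eq_zero
      intro a ha
      rw [Finset.mem_filter] at ha
      by_contra h
      exact ha.2 (hg a ha.1 h)
    rw [h0, add_zero]
  rw [h1, ← Finset.sum_fiberwise_of_maps_to (fun a ha => (Finset.mem_filter.mp ha).2)
    (fun a => f (g a))]
  apply Finset.sum_le_sum
  intro b hb
  have h2 : ∑ a ∈ A'.filter (fun a => g a = b), f (g a)
      = ((A'.filter (fun a => g a = b)).card : ℝ) * f b := by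
    rw [Finset.sum_congr rfl (fun a ha => by rw [(Finset.mem_filter.mp ha).2]),
      Finset.sum_const, nsmul_eq_mul]
  rw [h2]
  apply mul_le_mul_of_nonneg_right _ (hf b)
  calc ((A'.filter (fun a => g a = b)).card : ℝ)
      ≤ ((A.filter (fun a => g a = b)).card : ℝ) := by
        exact_mod_cast Finset.card_le_card (Finset.filter_subset_filter _ (Finset.filter_subset _ _))
    _ ≤ c b := hfib b hb

end sumhelp

lemma flatten_sigma {α β : Type*} [Fintype α] [Fintype β] [DecidableEq α] [DecidableEq β]
    (P : Finset α) (Q : α → Finset β) (h : α → β → ℝ) :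
    ∑ x ∈ (Finset.univ : Finset (α × β)).filter (fun x => x.1 ∈ P ∧ x.2 ∈ Q x.1), h x.1 x.2
      = ∑ a ∈ P, ∑ b ∈ Q a, h a b := by
  classical
  rw [Finset.sum_filter, Fintype.sum_prod_type]
  have key : ∀ a : α, (∑ b : β, if a ∈ P ∧ b ∈ Q a then h a b else 0)
      = if a ∈ P then ∑ b ∈ Q a, h a b else 0 := by
    intro a
    by_cases ha : a ∈ P
    · simp only [ha, true_and, if_true]
      rw [Finset.sum_ite_mem, Finset.univ_inter]
    · simp [ha]
  rw [Finset.sum_congr rfl fun a _ => key a, ← Finset.sum_filter, Finset.filter_univ_mem]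

lemma pnorm_nonneg (N m : ℕ) [NeZero N] (p : (ZMod N → ℝ) × (Finset (ZMod N) → ℝ))
    (hcard : ∀ X ∈ psector N m, (2:ℝ) ≤ (nX N m X : ℝ) - 2) : 0 ≤ pnorm N m p := by
  apply add_nonneg (Finset.sum_nonneg fun s _ => abs_nonneg _)
  apply mul_nonneg (by norm_num)
  exact Finset.sum_nonneg fun X hX => mul_nonneg (by linarith [hcard X hX]) (abs_nonneg _)


set_option maxHeartbeats 16000000 in
lemma dropF_lip (N : ℕ) [NeZero N] (m : ℕ) (ε : ℝ)
    (hN : 4 ≤ N) (hm : 2 ≤ m) (hmN : m + 2 ≤ N)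
    (p q : (ZMod N → ℝ) × (Finset (ZMod N) → ℝ)) :
    pnorm N m (dropF N m ε p - dropF N m ε q)
      ≤ (4 * |ε| + max (pnorm N m p) (pnorm N m q)) * pnorm N m (p - q) := by
  classical
  set M := Mset N m with hMdef
  set d : Finset (ZMod N) → ℝ := fun X => pext N m p.2 X - pext N m q.2 X with hd
  have hn2 : ∀ X ∈ psector N m, (2:ℝ) ≤ (nX N m X : ℝ) - 2 := by
    intro X hX
    have h4 := nX_ge_four N m hX
    have h4' : (4:ℝ) ≤ (nX N m X : ℝ) := by exact_mod_cast h4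
    linarith
  set T := ∑ s : ZMod N, |p.1 s - q.1 s| with hT
  set S := 2 * ∑ X ∈ psector N m, ((nX N m X : ℝ) - 2) * |d X| with hS
  have hT0 : 0 ≤ T := Finset.sum_nonneg fun s _ => abs_nonneg _
  have hS0 : 0 ≤ S := by
    apply mul_nonneg (by norm_num)
    exact Finset.sum_nonneg fun X hX => mul_nonneg (by linarith [hn2 X hX]) (abs_nonneg _)
  have hd_eq : ∀ X ∈ psector N m, d X = p.2 X - q.2 X := by
    intro X hX
    rw [hd]
    simp only
    rw [pext_eq_of_mem_psector N m hN hm hmN _ hX, pext_eq_of_mem_psector N m hN hm hmN _ hX]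
  have hpq : pnorm N m (p - q) = T + S := by
    rw [pnorm, hT, hS]
    congr 2
    apply Finset.sum_congr rfl
    intro X hX
    rw [hd_eq X hX]
    rfl
  have hd_psector : ∀ X : Finset (ZMod N), (X ∆ M).card = m → d X ≠ 0 → X ∈ psector N m := by
    intro X hXc hdX
    by_contra h
    apply hdX
    rw [hd]
    simp only
    rw [pext_sub_eq_zero_of_not_psector N m hN hm hmN p.2 q.2 hXc h, sub_self]
  have habs_le : ∀ (e2 : Finset (ZMod N) → ℝ), (∑ X ∈ psector N m, |e2 X|)
      ≤ ∑ X ∈ psector N m, ((nX N m X : ℝ) - 2) * |e2 X| :=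
    fun e2 => Finset.sum_le_sum fun X hX =>
      le_mul_of_one_le_left (abs_nonneg _) (by linarith [hn2 X hX])
  -- Part A
  have partA : (∑ s : ZMod N, |(dropF N m ε p - dropF N m ε q).1 s|) ≤ 2 * |ε| * S := by
    have hF1 : ∀ s : ZMod N, (dropF N m ε p - dropF N m ε q).1 s
        = 2 * ε * ∑ j ∈ pbdry N (tr N M (-s)), d (M ∆ tr N M (-s) ∆ {j, j + 1}) := by
      intro s
      have hr : (dropF N m ε p - dropF N m ε q).1 s
          = (dropF N m ε p).1 s - (dropF N m ε q).1 s := rfl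
      rw [hr]
      simp only [dropF]
      rw [← mul_sub, ← Finset.sum_sub_distrib]
    set PA : Finset (ZMod N × ZMod N) :=
      Finset.univ.filter (fun x : ZMod N × ZMod N =>
        x.1 ∈ (Finset.univ : Finset (ZMod N)) ∧ x.2 ∈ pbdry N (tr N M (-x.1))) with hPA
    set gA : ZMod N × ZMod N → Finset (ZMod N) :=
      fun x => M ∆ tr N M (-x.1) ∆ {x.2, x.2 + 1} with hgA
    have hflat := flatten_sigma (Finset.univ : Finset (ZMod N))
      (fun s => pbdry N (tr N M (-s)))
      (fun s j => |d (M ∆ tr N M (-s) ∆ {j, j + 1})|)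
    have step1 : (∑ s : ZMod N, |(dropF N m ε p - dropF N m ε q).1 s|)
        ≤ 2 * |ε| * ∑ x ∈ PA, |d (gA x)| := by
      calc ∑ s : ZMod N, |(dropF N m ε p - dropF N m ε q).1 s|
          ≤ ∑ s : ZMod N, 2 * |ε| * ∑ j ∈ pbdry N (tr N M (-s)),
              |d (M ∆ tr N M (-s) ∆ {j, j + 1})| := by
            apply Finset.sum_le_sum
            intro s _
            rw [hF1 s, abs_mul, abs_mul, abs_two]
            exact mul_le_mul_of_nonneg_left (Finset.abs_sum_le_sum_abs _ _) (by positivity)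
        _ = 2 * |ε| * ∑ s : ZMod N, ∑ j ∈ pbdry N (tr N M (-s)),
              |d (M ∆ tr N M (-s) ∆ {j, j + 1})| := by rw [Finset.mul_sum]
        _ = 2 * |ε| * ∑ x ∈ PA, |d (gA x)| := by rw [← hflat]
    have step2 : (∑ x ∈ PA, |d (gA x)|)
        ≤ ∑ X ∈ psector N m, (2 * ((nX N m X : ℝ) - 2)) * |d X| := by
      apply sum_comp_le PA (psector N m) gA (fun X => |d X|) _ (fun X => abs_nonneg _)
      · intro x hx hne
        have hj : x.2 ∈ pbdry N (tr N M (-x.1)) := ((Finset.mem_filter.mp hx).2).2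
        have hdne : d (gA x) ≠ 0 := fun h0 => hne (by rw [h0, abs_zero])
        apply hd_psector _ _ hdne
        have hset : gA x ∆ M = tr N M (-x.1) ∆ {x.2, x.2 + 1} := by
          simp only [hgA]
          ext y
          simp only [Finset.mem_symmDiff]
          tauto
        rw [hset, card_symmDiff_pair N hN hj, card_tr, hMdef, card_Mset N m hm hmN]
      · intro X hX
        have hcardfib : (PA.filter fun x => gA x = X).card ≤ nX N m X := by
          rw [nX]
          apply Finset.card_le_card_of_injOn (fun x => x.2)
          · intro x hx
            rw [Finset.mem_coe, Finset.mem_filter] at hx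
            obtain ⟨hxPA, hgX⟩ := hx
            have hj : x.2 ∈ pbdry N (tr N M (-x.1)) := ((Finset.mem_filter.mp hxPA).2).2
            have hW : tr N M (-x.1) = X ∆ Mset N m ∆ {x.2, x.2 + 1} := by
              rw [← hgX]
              simp only [hgA, ← hMdef]
              ext z
              simp only [Finset.mem_symmDiff]
              tauto
            rw [hW] at hj
            exact (pbdry_flip N (X ∆ Mset N m) x.2).mp hj
          · intro x hx y hy hxy
            have hxy2 : x.2 = y.2 := hxy
            simp only [Finset.mem_coe, Finset.mem_filter] at hx hy
            have hWx : tr N M (-x.1) = X ∆ Mset N m ∆ {x.2, x.2 + 1} := by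
              rw [← hx.2]
              simp only [hgA, ← hMdef]
              ext z
              simp only [Finset.mem_symmDiff]
              tauto
            have hWy : tr N M (-y.1) = X ∆ Mset N m ∆ {y.2, y.2 + 1} := by
              rw [← hy.2]
              simp only [hgA, ← hMdef]
              ext z
              simp only [Finset.mem_symmDiff]
              tauto
            rw [hxy2] at hWx
            have heq : (-x.1) = (-y.1) := by
              apply Mset_tr_inj N m hN hm hmN
              rw [← hMdef, hWx, hWy]
            exact Prod.ext (neg_inj.mp heq) hxy2
        calc ((PA.filter fun x => gA x = X).card : ℝ)
            ≤ (nX N m X : ℝ) := by exact_mod_cast hcardfib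
          _ ≤ 2 * ((nX N m X : ℝ) - 2) := by linarith [hn2 X hX]
    have hSid : (∑ X ∈ psector N m, (2 * ((nX N m X : ℝ) - 2)) * |d X|) = S := by
      rw [hS, Finset.mul_sum]
      exact Finset.sum_congr rfl fun X _ => by ring
    calc (∑ s : ZMod N, |(dropF N m ε p - dropF N m ε q).1 s|)
        ≤ 2 * |ε| * ∑ x ∈ PA, |d (gA x)| := step1
      _ ≤ 2 * |ε| * ∑ X ∈ psector N m, (2 * ((nX N m X : ℝ) - 2)) * |d X| :=
          mul_le_mul_of_nonneg_left step2 (by positivity)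
      _ = 2 * |ε| * S := by rw [hSid]
  -- Part B+C
  have partBC : (2 * ∑ X ∈ psector N m, ((nX N m X : ℝ) - 2) * |(dropF N m ε p - dropF N m ε q).2 X|)
      ≤ 2 * |ε| * S + T * (pnorm N m p) / 2 + (pnorm N m q) * S / 2 := by
    have hF2 : ∀ X ∈ psector N m, (dropF N m ε p - dropF N m ε q).2 X =
        -(ε / ((nX N m X : ℝ) - 2)) * ∑ j ∈ pbdry N (X ∆ Mset N m), d (X ∆ {j, j + 1})
        + (1 / (2 * ((nX N m X : ℝ) - 2))) *
            ∑ s : ZMod N, (p.1 s * pext N m p.2 (tr N X s ∆ tr N (Mset N m) s ∆ Mset N m)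
              - q.1 s * pext N m q.2 (tr N X s ∆ tr N (Mset N m) s ∆ Mset N m)) := by
      intro X hX
      have hcond := (Finset.mem_filter.mp hX).2
      have hr : (dropF N m ε p - dropF N m ε q).2 X
          = (dropF N m ε p).2 X - (dropF N m ε q).2 X := rfl
      rw [hr]
      simp only [dropF]
      rw [if_pos hcond, if_pos hcond]
      have e1 : ∀ (a b c e : ℝ), (a + b) - (c + e) = (a - c) + (b - e) := by intros; ring
      rw [e1]
      congr 1
      · rw [← mul_sub, ← Finset.sum_sub_distrib]
      · rw [← mul_sub, ← Finset.sum_sub_distrib]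
    have hpoint : ∀ X ∈ psector N m, ((nX N m X : ℝ) - 2) * |(dropF N m ε p - dropF N m ε q).2 X|
        ≤ |ε| * (∑ j ∈ pbdry N (X ∆ Mset N m), |d (X ∆ {j, j + 1})|)
          + (1/2) * ∑ s : ZMod N, |p.1 s * pext N m p.2 (tr N X s ∆ tr N (Mset N m) s ∆ Mset N m)
              - q.1 s * pext N m q.2 (tr N X s ∆ tr N (Mset N m) s ∆ Mset N m)| := by
      intro X hX
      have hn := hn2 X hX
      have hn2pos : (0:ℝ) < (nX N m X : ℝ) - 2 := by linarith
      have hn2ne : ((nX N m X : ℝ) - 2) ≠ 0 := ne_of_gt hn2pos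
      rw [hF2 X hX]
      set SA := ∑ j ∈ pbdry N (X ∆ Mset N m), d (X ∆ {j, j + 1}) with hSA
      set SB := ∑ s : ZMod N, (p.1 s * pext N m p.2 (tr N X s ∆ tr N (Mset N m) s ∆ Mset N m)
          - q.1 s * pext N m q.2 (tr N X s ∆ tr N (Mset N m) s ∆ Mset N m)) with hSB
      calc ((nX N m X : ℝ) - 2) * |(-(ε / ((nX N m X : ℝ) - 2))) * SA
              + (1 / (2 * ((nX N m X : ℝ) - 2))) * SB|
          ≤ ((nX N m X : ℝ) - 2) * (|(-(ε / ((nX N m X : ℝ) - 2))) * SA|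
              + |(1 / (2 * ((nX N m X : ℝ) - 2))) * SB|) :=
            mul_le_mul_of_nonneg_left (abs_add_le _ _) (le_of_lt hn2pos)
        _ = |ε| * |SA| + (1/2) * |SB| := by
            rw [abs_mul, abs_mul, abs_neg, abs_div, abs_of_pos hn2pos, abs_of_pos (by positivity : (0:ℝ) < 1 / (2 * ((nX N m X : ℝ) - 2)))]
            field_simp
        _ ≤ |ε| * (∑ j ∈ pbdry N (X ∆ Mset N m), |d (X ∆ {j, j + 1})|)
              + (1/2) * ∑ s : ZMod N, |p.1 s * pext N m p.2 (tr N X s ∆ tr N (Mset N m) s ∆ Mset N m)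
                  - q.1 s * pext N m q.2 (tr N X s ∆ tr N (Mset N m) s ∆ Mset N m)| := by
            apply add_le_add
            · exact mul_le_mul_of_nonneg_left (Finset.abs_sum_le_sum_abs _ _) (abs_nonneg _)
            · exact mul_le_mul_of_nonneg_left (Finset.abs_sum_le_sum_abs _ _) (by norm_num)
    -- step B
    have hSid : (∑ X ∈ psector N m, (2 * ((nX N m X : ℝ) - 2)) * |d X|) = S := by
      rw [hS, Finset.mul_sum]
      exact Finset.sum_congr rfl fun X _ => by ring
    have stepB : (∑ X ∈ psector N m, ∑ j ∈ pbdry N (X ∆ Mset N m), |d (X ∆ {j, j + 1})|) ≤ S := by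
      have hflatB := flatten_sigma (psector N m) (fun X => pbdry N (X ∆ Mset N m))
        (fun X j => |d (X ∆ {j, j + 1})|)
      rw [← hflatB]
      set PB : Finset (Finset (ZMod N) × ZMod N) :=
        Finset.univ.filter (fun x : Finset (ZMod N) × ZMod N =>
          x.1 ∈ psector N m ∧ x.2 ∈ pbdry N (x.1 ∆ Mset N m)) with hPB
      rw [← hSid]
      have : (∑ x ∈ PB, |d (x.1 ∆ {x.2, x.2 + 1})|)
          ≤ ∑ X ∈ psector N m, (2 * ((nX N m X : ℝ) - 2)) * |d X| := by
        apply sum_comp_le PB (psector N m) (fun x => x.1 ∆ {x.2, x.2 + 1})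
          (fun X => |d X|) _ (fun X => abs_nonneg _)
        · intro x hx hne
          obtain ⟨hx1, hx2⟩ := (Finset.mem_filter.mp hx).2
          have hdne : d (x.1 ∆ {x.2, x.2 + 1}) ≠ 0 := fun h0 => hne (by rw [h0, abs_zero])
          apply hd_psector _ _ hdne
          have hset : (x.1 ∆ {x.2, x.2 + 1}) ∆ M = (x.1 ∆ Mset N m) ∆ {x.2, x.2 + 1} := by
            rw [hMdef]
            ext z
            simp only [Finset.mem_symmDiff]
            tauto
          rw [hset, card_symmDiff_pair N hN hx2]
          exact card_psector_sector N m hx1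
        · intro X hX
          have hcardfib : (PB.filter fun x => x.1 ∆ {x.2, x.2 + 1} = X).card ≤ nX N m X := by
            rw [nX]
            apply Finset.card_le_card_of_injOn (fun x => x.2)
            · intro x hx
              rw [Finset.mem_coe, Finset.mem_filter] at hx
              obtain ⟨hxPB, hgX⟩ := hx
              obtain ⟨hx1, hx2⟩ := (Finset.mem_filter.mp hxPB).2
              have hW : x.1 ∆ Mset N m = (X ∆ Mset N m) ∆ {x.2, x.2 + 1} := by
                rw [← hgX]
                ext z
                simp only [Finset.mem_symmDiff]
                tauto
              rw [hW] at hx2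
              exact (pbdry_flip N (X ∆ Mset N m) x.2).mp hx2
            · intro x hx y hy hxy
              have hxy2 : x.2 = y.2 := hxy
              simp only [Finset.mem_coe, Finset.mem_filter] at hx hy
              have hx1 : x.1 = X ∆ {x.2, x.2 + 1} := by
                rw [← hx.2]
                ext z
                simp only [Finset.mem_symmDiff]
                tauto
              have hy1 : y.1 = X ∆ {y.2, y.2 + 1} := by
                rw [← hy.2]
                ext z
                simp only [Finset.mem_symmDiff]
                tauto
              rw [hxy2] at hx1
              exact Prod.ext (hx1.trans hy1.symm) hxy2
          calc ((PB.filter fun x => x.1 ∆ {x.2, x.2 + 1} = X).card : ℝ)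
              ≤ (nX N m X : ℝ) := by exact_mod_cast hcardfib
            _ ≤ 2 * ((nX N m X : ℝ) - 2) := by linarith [hn2 X hX]
      exact this
    -- step C
    have hXMY : ∀ (s : ZMod N) (X : Finset (ZMod N)),
        (tr N X s ∆ tr N (Mset N m) s ∆ Mset N m) ∆ Mset N m = tr N (X ∆ Mset N m) s := by
      intro s X
      rw [tr_symmDiff]
      ext z
      simp only [Finset.mem_symmDiff]
      tauto
    have hYmaps : ∀ (s : ZMod N), ∀ X ∈ psector N m,
        (tr N X s ∆ tr N (Mset N m) s ∆ Mset N m) ∈ psector N m := by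
      intro s X hX
      refine Finset.mem_filter.mpr ⟨Finset.mem_univ _, ?_, ?_⟩
      · rw [hXMY, card_tr]
        exact card_psector_sector N m hX
      · have hnn : nX N m (tr N X s ∆ tr N (Mset N m) s ∆ Mset N m) = nX N m X := by
          rw [nX, nX, hXMY, pbdry_tr, card_tr]
        rw [hnn]
        exact (Finset.mem_filter.mp hX).2.2
    have hYsum : ∀ (s : ZMod N) (f : Finset (ZMod N) → ℝ), (∀ W, 0 ≤ f W) →
        (∑ X ∈ psector N m, f (tr N X s ∆ tr N (Mset N m) s ∆ Mset N m))
          ≤ ∑ W ∈ psector N m, f W := by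
      intro s f hf
      have hinj : ∀ x ∈ psector N m, ∀ y ∈ psector N m,
          (tr N x s ∆ tr N (Mset N m) s ∆ Mset N m) = (tr N y s ∆ tr N (Mset N m) s ∆ Mset N m)
            → x = y := by
        intro x _ y _ h
        have h1 := congrArg (· ∆ Mset N m) h
        rw [hXMY, hXMY] at h1
        have h2 := tr_injective N s h1
        have h3 := congrArg (· ∆ Mset N m) h2
        rwa [nX_of_symmDiff_eq, nX_of_symmDiff_eq] at h3
      rw [← Finset.sum_image hinj]
      apply Finset.sum_le_sum_of_subset_of_nonneg
      · intro W hW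
        obtain ⟨X, hX, rfl⟩ := Finset.mem_image.mp hW
        exact hYmaps s X hX
      · intro W _ _
        exact hf W
    have hP2 : (∑ W ∈ psector N m, |p.2 W|) ≤ pnorm N m p / 2 := by
      have h1 := habs_le (fun W => p.2 W)
      have h2 : (0:ℝ) ≤ ∑ s : ZMod N, |p.1 s| := Finset.sum_nonneg fun s _ => abs_nonneg _
      have h3 : pnorm N m p = (∑ s : ZMod N, |p.1 s|)
          + 2 * ∑ X ∈ psector N m, ((nX N m X : ℝ) - 2) * |p.2 X| := rfl
      linarith
    have hdS : (∑ W ∈ psector N m, |d W|) ≤ S / 2 := by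
      have h1 := habs_le d
      rw [hS]
      linarith
    have inner1 : ∀ s : ZMod N,
        (∑ X ∈ psector N m, |pext N m p.2 (tr N X s ∆ tr N (Mset N m) s ∆ Mset N m)|)
          ≤ pnorm N m p / 2 := by
      intro s
      have h0 : ∀ X ∈ psector N m,
          |pext N m p.2 (tr N X s ∆ tr N (Mset N m) s ∆ Mset N m)|
            = |p.2 (tr N X s ∆ tr N (Mset N m) s ∆ Mset N m)| := fun X hX => by
        rw [pext_eq_of_mem_psector N m hN hm hmN _ (hYmaps s X hX)]
      rw [Finset.sum_congr rfl h0]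
      exact le_trans (hYsum s (fun W => |p.2 W|) (fun W => abs_nonneg _)) hP2
    have inner2 : ∀ s : ZMod N,
        (∑ X ∈ psector N m, |d (tr N X s ∆ tr N (Mset N m) s ∆ Mset N m)|) ≤ S / 2 := by
      intro s
      exact le_trans (hYsum s (fun W => |d W|) (fun W => abs_nonneg _)) hdS
    have stepC : (∑ X ∈ psector N m, ∑ s : ZMod N,
        |p.1 s * pext N m p.2 (tr N X s ∆ tr N (Mset N m) s ∆ Mset N m)
          - q.1 s * pext N m q.2 (tr N X s ∆ tr N (Mset N m) s ∆ Mset N m)|)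
        ≤ T * pnorm N m p / 2 + pnorm N m q * S / 2 := by
      rw [Finset.sum_comm]
      have hq1 : (∑ s : ZMod N, |q.1 s|) ≤ pnorm N m q := by
        have h2 : (0:ℝ) ≤ 2 * ∑ X ∈ psector N m, ((nX N m X : ℝ) - 2) * |q.2 X| := by
          apply mul_nonneg (by norm_num)
          exact Finset.sum_nonneg fun X hX => mul_nonneg (by linarith [hn2 X hX]) (abs_nonneg _)
        have h3 : pnorm N m q = (∑ s : ZMod N, |q.1 s|)
            + 2 * ∑ X ∈ psector N m, ((nX N m X : ℝ) - 2) * |q.2 X| := rfl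
        linarith
      calc (∑ s : ZMod N, ∑ X ∈ psector N m,
            |p.1 s * pext N m p.2 (tr N X s ∆ tr N (Mset N m) s ∆ Mset N m)
              - q.1 s * pext N m q.2 (tr N X s ∆ tr N (Mset N m) s ∆ Mset N m)|)
          ≤ ∑ s : ZMod N, ∑ X ∈ psector N m,
              (|p.1 s - q.1 s| * |pext N m p.2 (tr N X s ∆ tr N (Mset N m) s ∆ Mset N m)|
                + |q.1 s| * |d (tr N X s ∆ tr N (Mset N m) s ∆ Mset N m)|) := by
            apply Finset.sum_le_sum
            intro s _
            apply Finset.sum_le_sum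
            intro X _
            have hid : p.1 s * pext N m p.2 (tr N X s ∆ tr N (Mset N m) s ∆ Mset N m)
                - q.1 s * pext N m q.2 (tr N X s ∆ tr N (Mset N m) s ∆ Mset N m)
                = (p.1 s - q.1 s) * pext N m p.2 (tr N X s ∆ tr N (Mset N m) s ∆ Mset N m)
                  + q.1 s * (d (tr N X s ∆ tr N (Mset N m) s ∆ Mset N m)) := by
              simp only [hd]
              ring
            rw [hid]
            exact le_trans (abs_add_le _ _) (by rw [abs_mul, abs_mul])
        _ = ∑ s : ZMod N,
              (|p.1 s - q.1 s| * ∑ X ∈ psector N m,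
                  |pext N m p.2 (tr N X s ∆ tr N (Mset N m) s ∆ Mset N m)|
                + |q.1 s| * ∑ X ∈ psector N m,
                    |d (tr N X s ∆ tr N (Mset N m) s ∆ Mset N m)|) := by
            apply Finset.sum_congr rfl
            intro s _
            rw [Finset.sum_add_distrib, Finset.mul_sum, Finset.mul_sum]
        _ ≤ ∑ s : ZMod N, (|p.1 s - q.1 s| * (pnorm N m p / 2) + |q.1 s| * (S / 2)) := by
            apply Finset.sum_le_sum
            intro s _
            exact add_le_add (mul_le_mul_of_nonneg_left (inner1 s) (abs_nonneg _))
              (mul_le_mul_of_nonneg_left (inner2 s) (abs_nonneg _))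
        _ = (∑ s : ZMod N, |p.1 s - q.1 s|) * (pnorm N m p / 2)
              + (∑ s : ZMod N, |q.1 s|) * (S / 2) := by
            rw [Finset.sum_add_distrib, ← Finset.sum_mul, ← Finset.sum_mul]
        _ ≤ T * pnorm N m p / 2 + pnorm N m q * S / 2 := by
            rw [← hT]
            have h4 : (0:ℝ) ≤ S / 2 := by linarith
            have h5 := mul_le_mul_of_nonneg_right hq1 h4
            linarith
    -- combine
    calc (2 * ∑ X ∈ psector N m, ((nX N m X : ℝ) - 2) * |(dropF N m ε p - dropF N m ε q).2 X|)
        ≤ 2 * ∑ X ∈ psector N m,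
            (|ε| * (∑ j ∈ pbdry N (X ∆ Mset N m), |d (X ∆ {j, j + 1})|)
              + (1/2) * ∑ s : ZMod N,
                  |p.1 s * pext N m p.2 (tr N X s ∆ tr N (Mset N m) s ∆ Mset N m)
                    - q.1 s * pext N m q.2 (tr N X s ∆ tr N (Mset N m) s ∆ Mset N m)|) := by
          apply mul_le_mul_of_nonneg_left (Finset.sum_le_sum hpoint) (by norm_num)
      _ = 2 * |ε| * (∑ X ∈ psector N m, ∑ j ∈ pbdry N (X ∆ Mset N m), |d (X ∆ {j, j + 1})|)
            + (∑ X ∈ psector N m, ∑ s : ZMod N,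
                |p.1 s * pext N m p.2 (tr N X s ∆ tr N (Mset N m) s ∆ Mset N m)
                  - q.1 s * pext N m q.2 (tr N X s ∆ tr N (Mset N m) s ∆ Mset N m)|) := by
          rw [Finset.sum_add_distrib, ← Finset.mul_sum, ← Finset.mul_sum]
          ring
      _ ≤ 2 * |ε| * S + (T * pnorm N m p / 2 + pnorm N m q * S / 2) :=
          add_le_add (mul_le_mul_of_nonneg_left stepB (by positivity)) stepC
      _ = 2 * |ε| * S + T * (pnorm N m p) / 2 + (pnorm N m q) * S / 2 := by ring
  have hPp : 0 ≤ pnorm N m p := pnorm_nonneg N m p hn2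
  have hPq : 0 ≤ pnorm N m q := pnorm_nonneg N m q hn2
  set mx := max (pnorm N m p) (pnorm N m q) with hmx
  have hmx0 : 0 ≤ mx := le_trans hPp (le_max_left _ _)
  have h1 : T * pnorm N m p ≤ T * mx :=
    mul_le_mul_of_nonneg_left (le_max_left _ _) hT0
  have h2 : pnorm N m q * S ≤ mx * S :=
    mul_le_mul_of_nonneg_right (le_max_right _ _) hS0
  have h3 : 0 ≤ |ε| * T := mul_nonneg (abs_nonneg _) hT0
  have h4 : 0 ≤ mx * T := mul_nonneg hmx0 hT0
  have h5 : 0 ≤ mx * S := mul_nonneg hmx0 hS0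
  have hLHS : pnorm N m (dropF N m ε p - dropF N m ε q)
      = (∑ s : ZMod N, |(dropF N m ε p - dropF N m ε q).1 s|)
        + 2 * ∑ X ∈ psector N m, ((nX N m X : ℝ) - 2) * |(dropF N m ε p - dropF N m ε q).2 X| := rfl
  rw [hLHS, hpq]
  have hTmx : T * mx = mx * T := mul_comm _ _
  nlinarith [partA, partBC, h1, h2, h3, h4, h5]


theorem dropF_contraction (N : ℕ) [NeZero N] (m : ℕ) (ε : ℝ)
    (hN : 4 ≤ N) (hm : 2 ≤ m) (hmN : m + 2 ≤ N) :
    (∀ p q : (ZMod N → ℝ) × (Finset (ZMod N) → ℝ),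
        pnorm N m (dropF N m ε p - dropF N m ε q)
          ≤ (4 * |ε| + max (pnorm N m p) (pnorm N m q)) * pnorm N m (p - q)) ∧
      ∀ δ : ℝ, 0 < δ → 4 * |ε| + δ < 1 →
        ∀ p q : (ZMod N → ℝ) × (Finset (ZMod N) → ℝ),
          pnorm N m p ≤ δ → pnorm N m q ≤ δ →
            pnorm N m (dropF N m ε p - dropF N m ε q)
              ≤ (4 * |ε| + δ) * pnorm N m (p - q) := by
  have hn2 : ∀ X ∈ psector N m, (2:ℝ) ≤ (nX N m X : ℝ) - 2 := by
    intro X hX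
    have h4 := nX_ge_four N m hX
    have h4' : (4:ℝ) ≤ (nX N m X : ℝ) := by exact_mod_cast h4
    linarith
  refine ⟨fun p q => dropF_lip N m ε hN hm hmN p q, ?_⟩
  intro δ hδ hεδ p q hp hq
  have h1 := dropF_lip N m ε hN hm hmN p q
  have h2 : max (pnorm N m p) (pnorm N m q) ≤ δ := max_le hp hq
  have h3 : 0 ≤ pnorm N m (p - q) := pnorm_nonneg N m (p - q) hn2
  calc pnorm N m (dropF N m ε p - dropF N m ε q)
      ≤ (4 * |ε| + max (pnorm N m p) (pnorm N m q)) * pnorm N m (p - q) := h1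
    _ ≤ (4 * |ε| + δ) * pnorm N m (p - q) :=
        mul_le_mul_of_nonneg_right (by linarith) h3
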